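/- Let N and q and p be natural numbers with q ≥ 1, and let v₁,…,v_q and w₁,…,w_p be vectors in ℝ^N such that v₁,…,v_q span ℝ^N. Then there exists a constant κ > 0, depending only on v₁,…,v_q, such that for every P ∈ ℝ^N, every R > 0 and all ε > δ > 0 one has inf_{Q ∈ 𝒫_{ε,R}} sup_{Q' ∈ 𝒫_{ε−δ,R}} exp(−2π (Q − Q')·P) ≤ exp(−κ δ |P|), where · denotes the Euclidean inner product and |P| the Euclidean norm. -/

import Mathlib

set_option maxHeartbeats 1000000


/-- The set 𝒫_{ε,R} built from the vectors `v` and `w`: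
all sums `∑ s_j • v j + ∑ r_h • w h` with `s_j ∈ (−ε, 1+ε)` and `r_h ∈ (−R, R)`. -/
def Pset {N q p : ℕ} (v : Fin q → EuclideanSpace ℝ (Fin N))
    (w : Fin p → EuclideanSpace ℝ (Fin N)) (ε R : ℝ) :
    Set (EuclideanSpace ℝ (Fin N)) :=
  {x | ∃ (s : Fin q → ℝ) (r : Fin p → ℝ),
    (∀ j, s j ∈ Set.Ioo (-ε) (1 + ε)) ∧ (∀ h, r h ∈ Set.Ioo (-R) R) ∧
    x = ∑ j, s j • v j + ∑ h, r h • w h}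

/-- The Fourier-type estimate: there is `κ > 0`, depending only on `v`, such that for all
`P`, `R > 0` and `ε > δ > 0`,
`inf_{Q ∈ 𝒫_{ε,R}} sup_{Q' ∈ 𝒫_{ε−δ,R}} exp(−2π(Q−Q')·P) ≤ exp(−κ δ |P|)`. -/
theorem fourier_type (N q p : ℕ) (hq : 1 ≤ q)
    (v : Fin q → EuclideanSpace ℝ (Fin N)) (w : Fin p → EuclideanSpace ℝ (Fin N))
    (hspan : Submodule.span ℝ (Set.range v) = ⊤) :
    ∃ κ > (0 : ℝ), ∀ (P : EuclideanSpace ℝ (Fin N)) (R ε δ : ℝ),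
      0 < R → 0 < δ → δ < ε →
      (⨅ Q : Pset v w ε R, ⨆ Q' : Pset v w (ε - δ) R,
          Real.exp (-2 * Real.pi *
            (inner ℝ ((Q : EuclideanSpace ℝ (Fin N)) - (Q' : EuclideanSpace ℝ (Fin N))) P : ℝ)))
        ≤ Real.exp (-κ * δ * ‖P‖) := by
  classical
  obtain ⟨c, hc, hcP⟩ : ∃ c > (0:ℝ), ∀ P : EuclideanSpace ℝ (Fin N),
      c * ‖P‖ ≤ ∑ j, |(inner ℝ (v j) P : ℝ)| := by
    let T : EuclideanSpace ℝ (Fin N) →ₗ[ℝ] EuclideanSpace ℝ (Fin q) :=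
      { toFun := fun P => WithLp.toLp 2 (fun j => (inner ℝ (v j) P : ℝ))
        map_add' := fun x y => by ext j; simp [inner_add_right]
        map_smul' := fun m x => by ext j; simp [inner_smul_right] }
    have hTinj : Function.Injective T := by
      rw [← LinearMap.ker_eq_bot, Submodule.eq_bot_iff]
      intro P hP
      have h0 : ∀ j, (inner ℝ (v j) P : ℝ) = 0 := fun j => by
        have := congrArg (fun x => x j) (LinearMap.mem_ker.mp hP)
        simpa [T] using this
      have hPmem : P ∈ Submodule.span ℝ (Set.range v) := hspan ▸ Submodule.mem_top
      obtain ⟨cf, hcf⟩ := Submodule.mem_span_range_iff_exists_fun ℝ |>.mp hPmem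
      have : (inner ℝ P P : ℝ) = 0 := by
        nth_rewrite 1 [← hcf]
        rw [sum_inner]
        simp only [real_inner_smul_left, h0, mul_zero, Finset.sum_const_zero]
      simpa using inner_self_eq_zero.mp this
    obtain ⟨K, hK, hKa⟩ := (T.injective_iff_antilipschitz).mp hTinj
    refine ⟨(K : ℝ)⁻¹, by positivity, fun P => ?_⟩
    have h1 : ‖P‖ ≤ K * ‖T P‖ := by
      simpa [dist_eq_norm] using hKa.le_mul_dist P 0
    have h2 : ‖T P‖ ≤ ∑ j, |(inner ℝ (v j) P : ℝ)| := by
      rw [EuclideanSpace.norm_eq]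
      have hsq := Finset.sum_sq_le_sq_sum_of_nonneg
        (s := Finset.univ) (f := fun j => |(inner ℝ (v j) P : ℝ)|)
        (fun i _ => abs_nonneg _)
      calc Real.sqrt (∑ j, ‖T P j‖ ^ 2)
          ≤ Real.sqrt ((∑ j, |(inner ℝ (v j) P : ℝ)|) ^ 2) := by
            apply Real.sqrt_le_sqrt
            simpa [T, Real.norm_eq_abs, sq_abs] using hsq
        _ = ∑ j, |(inner ℝ (v j) P : ℝ)| := Real.sqrt_sq (by positivity)
    rw [inv_mul_le_iff₀ (by positivity)]
    calc ‖P‖ ≤ K * ‖T P‖ := h1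
      _ ≤ K * ∑ j, |(inner ℝ (v j) P : ℝ)| :=
          mul_le_mul_of_nonneg_left h2 (by positivity)
  refine ⟨Real.pi * c / 2, by positivity, ?_⟩
  intro P R ε δ hR hδ hδε
  have hεδ : 0 < ε - δ := by linarith
  have hne' : (Pset v w (ε - δ) R).Nonempty := by
    refine ⟨_, fun _ => 0, fun _ => 0, fun j =>
      ⟨show -(ε - δ) < 0 by linarith, show (0:ℝ) < 1 + (ε - δ) by linarith⟩,
      fun h => ⟨show -R < 0 by linarith, hR⟩, rfl⟩
  haveI : Nonempty (Pset v w (ε - δ) R) := hne'.to_subtype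
  have hbdd : BddBelow (Set.range fun Q : Pset v w ε R =>
      ⨆ Q' : Pset v w (ε - δ) R, Real.exp (-2 * Real.pi *
        (inner ℝ ((Q : EuclideanSpace ℝ (Fin N)) - (Q' : EuclideanSpace ℝ (Fin N))) P : ℝ))) := by
    refine ⟨0, ?_⟩
    rintro x ⟨Q, rfl⟩
    exact Real.iSup_nonneg fun _ => (Real.exp_pos _).le
  rcases eq_or_ne P 0 with rfl | hP0
  · have hne : (Pset v w ε R).Nonempty := by
      refine ⟨_, fun _ => 0, fun _ => 0, fun j =>
        ⟨show -ε < 0 by linarith, show (0:ℝ) < 1 + ε by linarith⟩,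
        fun h => ⟨show -R < 0 by linarith, hR⟩, rfl⟩
    haveI : Nonempty (Pset v w ε R) := hne.to_subtype
    simp [ciSup_const, ciInf_const]
  -- main case
  set a : Fin q → ℝ := fun j => (inner ℝ (v j) P : ℝ) with ha
  set b : Fin p → ℝ := fun h => (inner ℝ (w h) P : ℝ) with hb
  set A : ℝ := ∑ j, |a j| with hA'
  set B : ℝ := ∑ h, |b h| with hB'
  have hA : c * ‖P‖ ≤ A := hcP P
  have hPnorm : 0 < ‖P‖ := norm_pos_iff.mpr hP0
  have hApos : 0 < A := lt_of_lt_of_le (by positivity) hA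
  have hBnn : 0 ≤ B := Finset.sum_nonneg fun _ _ => abs_nonneg _
  set t : ℝ := min (1/2) (δ * A / (4 * (R * B + 1))) with ht
  have ht0 : 0 < t := lt_min (by norm_num) (by positivity)
  have ht2 : t ≤ 1/2 := min_le_left _ _
  have htRB : t * (R * B) ≤ δ * A / 4 := by
    have h1 : t ≤ δ * A / (4 * (R * B + 1)) := min_le_right _ _
    have h2 : (0:ℝ) ≤ R * B := by positivity
    have h3 : δ * A / (4 * (R * B + 1)) * (R * B) ≤ δ * A / 4 := by
      rw [div_mul_eq_mul_div, div_le_div_iff₀ (by positivity) (by positivity)]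
      nlinarith [mul_pos hδ hApos]
    calc t * (R * B) ≤ δ * A / (4 * (R * B + 1)) * (R * B) :=
          mul_le_mul_of_nonneg_right h1 h2
      _ ≤ δ * A / 4 := h3
  set s : Fin q → ℝ := fun j => if 0 ≤ a j then 1 + ε - δ/2 else -(ε - δ/2) with hs
  set r : Fin p → ℝ := fun h => if 0 ≤ b h then R*(1-t) else -(R*(1-t)) with hr
  have hQmem : (∑ j, s j • v j + ∑ h, r h • w h) ∈ Pset v w ε R := by
    refine ⟨s, r, fun j => ?_, fun h => ?_, rfl⟩
    · simp only [hs]; split <;> constructor <;> linarith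
    · simp only [hr]
      have h1 : R * (1 - t) < R := by nlinarith
      have h2 : 0 ≤ R * (1 - t) := by nlinarith
      split <;> constructor <;> linarith
  have expand : ∀ (u : Fin q → ℝ) (z : Fin p → ℝ),
      (inner ℝ (∑ j, u j • v j + ∑ h, z h • w h) P : ℝ)
        = ∑ j, u j * a j + ∑ h, z h * b h := by
    intro u z
    rw [inner_add_left, sum_inner, sum_inner]
    simp only [real_inner_smul_left, ha, hb]
  refine le_trans (ciInf_le hbdd ⟨_, hQmem⟩) (ciSup_le ?_)
  rintro ⟨x, s', r', hs', hr', rfl⟩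
  rw [Real.exp_le_exp, inner_sub_left, expand s r, expand s' r']
  have hsj : ∀ j, s' j * a j + δ/2 * |a j| ≤ s j * a j := by
    intro j
    rcases le_or_gt 0 (a j) with h | h
    · rw [hs]; simp only [if_pos h]
      rw [abs_of_nonneg h]
      have h2 := (hs' j).2
      nlinarith
    · rw [hs]; simp only [if_neg (not_le.mpr h)]
      rw [abs_of_neg h]
      have h1 := (hs' j).1
      nlinarith
  have hrh : ∀ h, r' h * b h - t * R * |b h| ≤ r h * b h := by
    intro h
    rcases le_or_gt 0 (b h) with hbh | hbh
    · rw [hr]; simp only [if_pos hbh]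
      rw [abs_of_nonneg hbh]
      have h2 := (hr' h).2
      nlinarith [mul_le_mul_of_nonneg_right h2.le hbh]
    · rw [hr]; simp only [if_neg (not_le.mpr hbh)]
      rw [abs_of_neg hbh]
      have h1 := (hr' h).1
      nlinarith [mul_lt_mul_of_neg_right h1 hbh]
  have sum1 : ∑ j, s' j * a j + δ/2 * A ≤ ∑ j, s j * a j := by
    have := Finset.sum_le_sum (fun j (_ : j ∈ Finset.univ) => hsj j)
    rw [hA', Finset.mul_sum]
    simpa [Finset.sum_add_distrib] using this
  have sum2 : ∑ h, r' h * b h - t * R * B ≤ ∑ h, r h * b h := by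
    have := Finset.sum_le_sum (fun h (_ : h ∈ Finset.univ) => hrh h)
    rw [hB', Finset.mul_sum]
    simpa [Finset.sum_sub_distrib] using this
  have key : δ/4 * A ≤ (∑ j, s j * a j + ∑ h, r h * b h)
      - (∑ j, s' j * a j + ∑ h, r' h * b h) := by
    have : t * R * B = t * (R * B) := by ring
    linarith [htRB, sum1, sum2, this.le]
  have h3 : δ/4 * (c * ‖P‖) ≤ (∑ j, s j * a j + ∑ h, r h * b h)
      - (∑ j, s' j * a j + ∑ h, r' h * b h) := by
    refine le_trans ?_ key
    nlinarith
  nlinarith [mul_le_mul_of_nonneg_left h3 (by positivity : (0:ℝ) ≤ 2 * Real.pi),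
    Real.pi_pos]
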